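/- Let ŝ_K be any estimator valued in the linear span S of an orthonormal system (ψ_λ)_{λ∈Λ} in L²(μ) and measurable with respect to σ(X_{B_K}), and let X be an independent copy of X_1. Then for the L² density contrast γ(t) = ‖t‖² − 2t: Var( (γ(ŝ_K) − γ(s_o))(X) | X_{B_K} ) ≤ 4 ‖ŝ_K − s_o‖² (PΨ − ‖s_o‖²), where Ψ = Σ_λ ψ_λ² and s_o is the orthogonal projection of s⋆ onto S. -/

import Mathlib

open MeasureTheory ProbabilityTheory
open scoped ENNReal

/-- Product of two L² functions is integrable. -/
lemma integrable_mul_of_memL2 {α : Type*} [MeasurableSpace α] {μ : Measure α}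
    {f g : α → ℝ} (hf : MemLp f 2 μ) (hg : MemLp g 2 μ) :
    Integrable (fun x => f x * g x) μ := by
  have h : MemLp (g • f) 1 μ := by
    exact hf.smul hg
  have := memLp_one_iff_integrable.mp h
  exact (by simpa [Pi.smul_apply, smul_eq_mul, mul_comm] using this : Integrable (f * g) μ)

/-- Variance is invariant under adding a constant. -/
lemma variance_const_add' {Ω : Type*} [MeasurableSpace Ω] (μ : Measure Ω)
    [IsProbabilityMeasure μ] (C : ℝ) (X : Ω → ℝ) (hX : Integrable X μ) :
    variance (fun x => C + X x) μ = variance X μ := by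
  have hint : ∫ x, (C + X x) ∂μ = C + ∫ x, X x ∂μ := by
    rw [integral_add (integrable_const C) hX, integral_const]
    simp
  have h2 : ∀ ω, C + X ω - (C + ∫ x, X x ∂μ) = X ω - ∫ x, X x ∂μ := fun ω => by ring
  simp only [variance, evariance, hint, h2]

/-- Margin-type bound (Proposition 4, condition CMarg) for least-squares density
estimation: for any element `u = Σ_λ a_λ ψ_λ` of the model `S` (in particular any
estimator built from the block `X_{B_K}`, conditionally on that block),
`Var_P(γ(u) - γ(s_o)) ≤ 4 ‖u - s_o‖² (PΨ - ‖s_o‖²)`, where `γ(t) = ‖t‖² - 2t`,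
`s_o = Σ_λ (Pψ_λ)ψ_λ` and `Ψ = Σ_λ ψ_λ²`. -/
theorem margin_condition_density_L2
    {E Λ : Type*} [MeasurableSpace E] [Fintype Λ] [DecidableEq Λ]
    (ν : Measure E) [SigmaFinite ν]
    (sstar : E → ℝ) (hs0 : ∀ x, 0 ≤ sstar x) (hs2 : MemLp sstar 2 ν)
    (P : Measure E) (hP : P = ν.withDensity (fun x => ENNReal.ofReal (sstar x)))
    [IsProbabilityMeasure P]
    (ψ : Λ → E → ℝ) (hψ : ∀ l, Measurable (ψ l))
    (horth : ∀ l l', ∫ x, ψ l x * ψ l' x ∂ν = if l = l' then 1 else 0)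
    (hψ2P : ∀ l, MemLp (ψ l) 2 P)
    (a : Λ → ℝ) :
    variance (fun x =>
        ((∫ y, (∑ l, a l * ψ l y) ^ 2 ∂ν) - 2 * (∑ l, a l * ψ l x))
          - ((∫ y, (∑ l, (∫ z, ψ l z ∂P) * ψ l y) ^ 2 ∂ν)
              - 2 * (∑ l, (∫ z, ψ l z ∂P) * ψ l x))) P
      ≤ 4 * (∫ y, (∑ l, a l * ψ l y - ∑ l, (∫ z, ψ l z ∂P) * ψ l y) ^ 2 ∂ν)
          * ((∫ x, (∑ l, (ψ l x) ^ 2) ∂P)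
              - ∫ y, (∑ l, (∫ z, ψ l z ∂P) * ψ l y) ^ 2 ∂ν) := by
  classical
  -- notation
  set b : Λ → ℝ := fun l => ∫ z, ψ l z ∂P with hbdef
  have hb : ∀ l, (∫ z, ψ l z ∂P) = b l := fun l => rfl
  simp only [hb]
  set c : Λ → ℝ := fun l => a l - b l with hcdef
  -- ψ l is in L²(ν)
  have hψν : ∀ l, MemLp (ψ l) 2 ν := by
    intro l
    refine (memLp_two_iff_integrable_sq (hψ l).aestronglyMeasurable).2 ?_
    by_contra h
    have h1 := horth l l
    rw [if_pos rfl] at h1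
    have h0 : ∫ x, ψ l x * ψ l x ∂ν = 0 := by
      refine integral_undef ?_
      simpa [sq] using h
    rw [h0] at h1
    norm_num at h1
  have hmulν : ∀ l l', Integrable (fun x => ψ l x * ψ l' x) ν :=
    fun l l' => integrable_mul_of_memL2 (hψν l) (hψν l')
  -- norm of an element of the model S
  have key : ∀ d : Λ → ℝ, (∫ y, (∑ l, d l * ψ l y) ^ 2 ∂ν) = ∑ l, (d l) ^ 2 := by
    intro d
    have h1 : ∀ y, (∑ l, d l * ψ l y) ^ 2
        = ∑ l, ∑ l', (d l * d l') * (ψ l y * ψ l' y) := by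
      intro y
      rw [sq, Finset.sum_mul_sum]
      refine Finset.sum_congr rfl fun l _ => Finset.sum_congr rfl fun l' _ => by ring
    simp_rw [h1]
    rw [integral_finset_sum _ (fun l _ =>
      integrable_finset_sum _ (fun l' _ => (hmulν l l').const_mul _))]
    have h2 : ∀ l, (∫ y, ∑ l', (d l * d l') * (ψ l y * ψ l' y) ∂ν)
        = ∑ l', (d l * d l') * (if l = l' then 1 else 0) := by
      intro l
      rw [integral_finset_sum _ (fun l' _ => (hmulν l l').const_mul _)]
      exact Finset.sum_congr rfl fun l' _ => by rw [integral_const_mul, horth]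
    simp_rw [h2]
    simp [Finset.sum_ite_eq, sq]
  -- rewrite the difference of sums
  have hsum_sub : ∀ x, (∑ l, a l * ψ l x) - (∑ l, b l * ψ l x) = ∑ l, c l * ψ l x := by
    intro x
    rw [← Finset.sum_sub_distrib]
    exact Finset.sum_congr rfl fun l _ => by simp [hcdef]; ring
  -- the centered function h
  set h : E → ℝ := fun x => ∑ l, c l * (ψ l x - b l) with hhdef
  have hhP : MemLp h 2 P := by
    have h0 : ∀ l : Λ, MemLp (fun x => c l * (ψ l x - b l)) 2 P := fun l =>
      (((hψ2P l).sub (memLp_const (b l))).const_mul (c l) :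
        MemLp (fun x => c l * (ψ l x - b l)) 2 P)
    have := memLp_finset_sum' (μ := P) Finset.univ (fun l _ => h0 l)
    rw [hhdef]
    convert this using 1
    funext x
    simp [Finset.sum_apply]
  -- rewrite the variance argument
  set A := ∫ y, (∑ l, a l * ψ l y) ^ 2 ∂ν with hA
  set B := ∫ y, (∑ l, b l * ψ l y) ^ 2 ∂ν with hB
  set K : ℝ := A - B - 2 * ∑ l, c l * b l with hK
  have hx : ∀ x, h x = (∑ l, a l * ψ l x) - (∑ l, b l * ψ l x) - ∑ l, c l * b l := by
    intro x
    have : h x = ∑ l, (a l * ψ l x - b l * ψ l x - c l * b l) := by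
      refine Finset.sum_congr rfl fun l _ => by simp [hcdef]; ring
    rw [this, Finset.sum_sub_distrib, Finset.sum_sub_distrib]
  have hfun : (fun x =>
        (A - 2 * (∑ l, a l * ψ l x)) - (B - 2 * (∑ l, b l * ψ l x)))
      = fun x => K + (-2) * h x := by
    funext x
    rw [hx x, hK]
    ring
  rw [hfun, variance_const_add' P K _ (((hhP.integrable one_le_two).const_mul (-2))),
    variance_const_mul]
  -- bound the variance of h
  have hvar_le : variance h P ≤ ∫ x, h x ^ 2 ∂P := by
    have := variance_le_expectation_sq (μ := P) hhP.aestronglyMeasurable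
    simpa [Pi.pow_apply] using this
  -- Cauchy–Schwarz pointwise bound
  have hsq1 : ∀ l : Λ, Integrable (fun x => (ψ l x - b l) ^ 2) P := fun l =>
    (((hψ2P l).sub (memLp_const (b l))).integrable_sq :
      Integrable (fun x => (ψ l x - b l) ^ 2) P)
  have hint_sq : Integrable (fun x => ∑ l, (ψ l x - b l) ^ 2) P :=
    integrable_finset_sum _ (fun l _ => hsq1 l)
  have hCS : ∫ x, h x ^ 2 ∂P ≤ (∑ l, c l ^ 2) * ∫ x, ∑ l, (ψ l x - b l) ^ 2 ∂P := by
    rw [← integral_const_mul]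
    refine integral_mono hhP.integrable_sq (hint_sq.const_mul _) (fun x => ?_)
    have := Finset.sum_mul_sq_le_sq_mul_sq Finset.univ c (fun l => ψ l x - b l)
    simpa [hhdef] using this
  -- compute the second-moment term
  have hpsi_var : ∀ l, ∫ x, (ψ l x - b l) ^ 2 ∂P = (∫ x, ψ l x ^ 2 ∂P) - b l ^ 2 := by
    intro l
    have h1 : ∀ x, (ψ l x - b l) ^ 2 = ψ l x ^ 2 - (2 * b l) * ψ l x + b l ^ 2 :=
      fun x => by ring
    simp_rw [h1]
    have hi1 : Integrable (fun x => ψ l x ^ 2) P := (hψ2P l).integrable_sq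
    have hi2 : Integrable (fun x => (2 * b l) * ψ l x) P :=
      (((hψ2P l).integrable one_le_two).const_mul (2 * b l) :
        Integrable (fun x => (2 * b l) * ψ l x) P)
    have hi3 : Integrable (fun x => ψ l x ^ 2 - (2 * b l) * ψ l x) P :=
      (hi1.sub hi2 : Integrable (fun x => ψ l x ^ 2 - (2 * b l) * ψ l x) P)
    rw [integral_add hi3 (integrable_const _), integral_sub hi1 hi2,
      integral_const_mul, integral_const]
    simp [hbdef]
    ring
  have hsum_var : ∫ x, ∑ l, (ψ l x - b l) ^ 2 ∂P
      = (∫ x, ∑ l, ψ l x ^ 2 ∂P) - ∑ l, b l ^ 2 := by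
    rw [integral_finset_sum _ (fun l _ => hsq1 l),
      integral_finset_sum _ (fun l _ => ((hψ2P l).integrable_sq :
        Integrable (fun x => ψ l x ^ 2) P)), ← Finset.sum_sub_distrib]
    exact Finset.sum_congr rfl fun l _ => hpsi_var l
  -- identify the RHS pieces
  have hRHS1 : (∫ y, (∑ l, a l * ψ l y - ∑ l, b l * ψ l y) ^ 2 ∂ν) = ∑ l, c l ^ 2 := by
    have : (fun y => (∑ l, a l * ψ l y - ∑ l, b l * ψ l y) ^ 2)
        = fun y => (∑ l, c l * ψ l y) ^ 2 := by
      funext y; rw [hsum_sub y]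
    rw [this, key]
  have hRHS2 : B = ∑ l, b l ^ 2 := key b
  -- final assembly
  rw [hRHS1]
  have hnn : (0:ℝ) ≤ ∑ l, c l ^ 2 := Finset.sum_nonneg fun l _ => sq_nonneg _
  have hchain : variance h P ≤ (∑ l, c l ^ 2) * ((∫ x, ∑ l, ψ l x ^ 2 ∂P) - ∑ l, b l ^ 2) := by
    calc variance h P ≤ ∫ x, h x ^ 2 ∂P := hvar_le
      _ ≤ (∑ l, c l ^ 2) * ∫ x, ∑ l, (ψ l x - b l) ^ 2 ∂P := hCS
      _ = (∑ l, c l ^ 2) * ((∫ x, ∑ l, ψ l x ^ 2 ∂P) - ∑ l, b l ^ 2) := by rw [hsum_var]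
  rw [hRHS2] at *
  nlinarith [variance_nonneg h P]
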